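/- Let S be an n-simplex in R^n with maximal faces S^i, and let A^1,...,A^{n+1} be closed convex subsets of S with S^i ⊆ A^i for each i. If the sets A^i have a common point v (i.e., ∩_i A^i ≠ ∅), then the union ∪_i A^i covers S. -/

import Mathlib

open Finset

lemma exists_weights {E : Type*} [AddCommGroup E] [Module ℝ E] {m : ℕ}
    (a : Fin m → E) {x : E} (hx : x ∈ convexHull ℝ (Set.range a)) :
    ∃ w : Fin m → ℝ, (∀ j, 0 ≤ w j) ∧ ∑ j, w j = 1 ∧ ∑ j, w j • a j = x := by
  rw [convexHull_range_eq_exists_affineCombination] at hx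
  obtain ⟨s, w, h0, h1, h2⟩ := hx
  rw [s.affineCombination_eq_linear_combination a w h1] at h2
  refine ⟨fun j => if j ∈ s then w j else 0, fun j => ?_, ?_, ?_⟩
  · dsimp only
    split
    · exact h0 _ ‹_›
    · exact le_refl 0
  · simp only
    rw [Finset.sum_ite_mem, Finset.univ_inter, h1]
  · simp only [ite_smul, zero_smul]
    rw [Finset.sum_ite_mem, Finset.univ_inter, h2]

theorem stmt_2 (n : ℕ) (a : Fin (n + 1) → EuclideanSpace ℝ (Fin n))
    (ha : AffineIndependent ℝ a)
    (S : Set (EuclideanSpace ℝ (Fin n))) (hS : S = convexHull ℝ (Set.range a))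
    (face : Fin (n + 1) → Set (EuclideanSpace ℝ (Fin n)))
    (hface : ∀ i, face i = convexHull ℝ (a '' {j | j ≠ i}))
    (A : Fin (n + 1) → Set (EuclideanSpace ℝ (Fin n)))
    (hAclosed : ∀ i, IsClosed (A i)) (hAconv : ∀ i, Convex ℝ (A i))
    (hAS : ∀ i, A i ⊆ S) (hfaceA : ∀ i, face i ⊆ A i)
    (hcap : (⋂ i, A i).Nonempty) :
    S ⊆ ⋃ i, A i := by
  obtain ⟨v, hv⟩ := hcap
  have hvA : ∀ i, v ∈ A i := fun i => Set.mem_iInter.mp hv i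
  have hvS : v ∈ convexHull ℝ (Set.range a) := hS ▸ hAS 0 (hvA 0)
  intro x hx
  rw [hS] at hx
  obtain ⟨w, hw0, hw1, hwx⟩ := exists_weights a hx
  obtain ⟨c, hc0, hc1, hcv⟩ := exists_weights a hvS
  -- pick the index minimizing w j / c j among those with c j > 0
  have hTne : (Finset.univ.filter (fun j => 0 < c j)).Nonempty := by
    by_contra h
    rw [Finset.not_nonempty_iff_eq_empty, Finset.filter_eq_empty_iff] at h
    have : ∀ j : Fin (n+1), c j = 0 := fun j => le_antisymm (not_lt.mp (h (Finset.mem_univ j))) (hc0 j)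
    simp [this] at hc1
  obtain ⟨i, hiT, hmin⟩ := Finset.exists_min_image _ (fun j => w j / c j) hTne
  have hci : 0 < c i := (Finset.mem_filter.mp hiT).2
  set t : ℝ := w i / c i with ht
  have ht0 : 0 ≤ t := div_nonneg (hw0 i) hci.le
  have hwi : w i = t * c i := by rw [ht]; exact (div_mul_cancel₀ _ hci.ne').symm
  have hnn : ∀ j, 0 ≤ w j - t * c j := by
    intro j
    by_cases hcj : 0 < c j
    · have := hmin j (Finset.mem_filter.mpr ⟨Finset.mem_univ j, hcj⟩)
      have := (le_div_iff₀ hcj).mp this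
      linarith
    · have : c j = 0 := le_antisymm (not_lt.mp hcj) (hc0 j)
      simp [this, hw0 j]
  -- x is a convex combination of v and the a j, j ≠ i, all in A i
  apply Set.mem_iUnion.mpr ⟨i, ?_⟩
  have haA : ∀ j, j ≠ i → a j ∈ A i := by
    intro j hj
    apply hfaceA i
    rw [hface i]
    exact subset_convexHull ℝ _ ⟨j, hj, rfl⟩
  set u : Fin (n+1) → ℝ := fun j => if j = i then t else w j - t * c j with hu
  set p : Fin (n+1) → EuclideanSpace ℝ (Fin n) := fun j => if j = i then v else a j with hp
  have hx' : ∑ j, u j • p j = x := by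
    have h1 : ∑ j, u j • p j = t • v + ∑ j ∈ Finset.univ.erase i, (w j - t * c j) • a j := by
      rw [← Finset.add_sum_erase _ _ (Finset.mem_univ i)]
      congr 1
      · simp [hu, hp]
      · apply Finset.sum_congr rfl
        intro j hj
        have hji : j ≠ i := Finset.ne_of_mem_erase hj
        simp [hu, hp, hji]
    have h2 : t • v = ∑ j, (t * c j) • a j := by
      rw [← hcv, Finset.smul_sum]
      simp [smul_smul]
    have h3 : ∑ j, (t * c j) • a j
        = (t * c i) • a i + ∑ j ∈ Finset.univ.erase i, (t * c j) • a j :=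
      (Finset.add_sum_erase _ (fun j => (t * c j) • a j) (Finset.mem_univ i)).symm
    have h4 : ∑ j ∈ Finset.univ.erase i, ((t * c j) • a j + (w j - t * c j) • a j)
        = ∑ j ∈ Finset.univ.erase i, w j • a j :=
      Finset.sum_congr rfl (fun j _ => by rw [← add_smul]; ring_nf)
    rw [h1, h2, h3, add_assoc, ← Finset.sum_add_distrib, h4, ← hwi,
      Finset.add_sum_erase _ (fun j => w j • a j) (Finset.mem_univ i), hwx]
  rw [← hx']
  apply (hAconv i).sum_mem
  · intro j _
    by_cases hj : j = i <;> simp [hu, hj, ht0, hnn j]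
  · rw [← Finset.add_sum_erase _ _ (Finset.mem_univ i)]
    have : ∑ j ∈ Finset.univ.erase i, u j = (1 - w i) - t * (1 - c i) := by
      have e1 : ∑ j ∈ Finset.univ.erase i, u j = ∑ j ∈ Finset.univ.erase i, (w j - t * c j) := by
        apply Finset.sum_congr rfl
        intro j hj
        simp [hu, Finset.ne_of_mem_erase hj]
      have e2 : ∑ j ∈ Finset.univ.erase i, w j = 1 - w i := by
        rw [← hw1, ← Finset.add_sum_erase _ w (Finset.mem_univ i)]; ring
      have e3 : ∑ j ∈ Finset.univ.erase i, c j = 1 - c i := by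
        rw [← hc1, ← Finset.add_sum_erase _ c (Finset.mem_univ i)]; ring
      rw [e1, Finset.sum_sub_distrib, e2, ← Finset.mul_sum, e3]
    rw [this]
    simp only [hu, if_pos rfl]
    rw [hwi]
    ring
  · intro j _
    by_cases hj : j = i
    · simp [hp, hj, hvA i]
    · simp [hp, hj, haA j hj]
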